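/- For k ≥ 0 and r ≥ 3, if G is a K_{1,r}-free graph of order n with minimum degree δ ≥ k+1, then the k-independence number satisfies α_k(G)·(δ - k + (r-1)(k+1)) ≤ (r-1)(k+1)·n. -/
import Mathlib


open Finset

variable {V : Type*}

/-- A finset is independent in `G` : no two of its vertices are adjacent. -/
def IsIndepFinset (G : SimpleGraph V) (S : Finset V) : Prop :=
  ∀ u ∈ S, ∀ v ∈ S, ¬ G.Adj u v

/-- A finset dominates `G` : every vertex outside it has a neighbour inside it. -/
def IsDomFinset (G : SimpleGraph V) (D : Finset V) : Prop :=
  ∀ v, v ∉ D → ∃ u ∈ D, G.Adj u v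

/-- The independence number of `G`. -/
noncomputable def indepNum [Fintype V] (G : SimpleGraph V) : ℕ :=
  sSup {n | ∃ S : Finset V, IsIndepFinset G S ∧ S.card = n}

/-- The domination number of `G`. -/
noncomputable def domNum [Fintype V] (G : SimpleGraph V) : ℕ :=
  sInf {n | ∃ D : Finset V, IsDomFinset G D ∧ D.card = n}

/-- `G` is `K_{1,r}`-free: no vertex has `r` pairwise nonadjacent neighbours. -/
def K1rFree (G : SimpleGraph V) (r : ℕ) : Prop :=
  ¬ ∃ (v : V) (A : Finset V), (∀ a ∈ A, G.Adj v a) ∧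
      (∀ a ∈ A, ∀ b ∈ A, a ≠ b → ¬ G.Adj a b) ∧ A.card = r

/-- S is a k-independent set: the subgraph induced by S has maximum degree ≤ k. -/
def IsKIndepFinset (G : SimpleGraph V) [DecidableRel G.Adj] (k : ℕ) (S : Finset V) : Prop :=
  ∀ v ∈ S, (S.filter (fun u => G.Adj v u)).card ≤ k

/-- The k-independence number of G. -/
noncomputable def kIndepNum [Fintype V] (G : SimpleGraph V) [DecidableRel G.Adj] (k : ℕ) : ℕ :=
  sSup {n | ∃ S : Finset V, IsKIndepFinset G k S ∧ S.card = n}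

/-- Greedy: a finset of induced max degree ≤ k contains an independent set of
proportional size. -/
lemma greedy_aux [DecidableEq V] (G : SimpleGraph V) [DecidableRel G.Adj] (k : ℕ)
    (X : Finset V) (hX : ∀ v ∈ X, (X.filter (fun u => G.Adj v u)).card ≤ k) :
    ∃ A ⊆ X, (∀ a ∈ A, ∀ b ∈ A, a ≠ b → ¬ G.Adj a b) ∧ X.card ≤ (k + 1) * A.card := by
  induction X using Finset.strongInduction with
  | _ X IH =>
    rcases X.eq_empty_or_nonempty with rfl | ⟨x, hx⟩
    · exact ⟨∅, by simp⟩
    · set N := insert x (X.filter (fun u => G.Adj x u)) with hN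
      set X' := X \ N with hX'
      have hss : X' ⊂ X := by
        refine Finset.sdiff_ssubset ?_ ?_
        · exact Finset.insert_subset hx (Finset.filter_subset _ _)
        · exact ⟨x, Finset.mem_insert_self _ _⟩
      have hX'h : ∀ v ∈ X', (X'.filter (fun u => G.Adj v u)).card ≤ k := by
        intro v hv
        refine le_trans (Finset.card_le_card ?_) (hX v (Finset.mem_sdiff.mp hv).1)
        exact Finset.filter_subset_filter _ (Finset.sdiff_subset)
      obtain ⟨A', hA'sub, hA'indep, hA'card⟩ := IH X' hss hX'h
      have hxA' : x ∉ A' := fun h => (Finset.mem_sdiff.mp (hA'sub h)).2 (Finset.mem_insert_self _ _)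
      refine ⟨insert x A', ?_, ?_, ?_⟩
      · exact Finset.insert_subset hx (hA'sub.trans Finset.sdiff_subset)
      · intro a ha b hb hab
        have key : ∀ c ∈ A', ¬ G.Adj x c := by
          intro c hc hadj
          exact (Finset.mem_sdiff.mp (hA'sub hc)).2
            (Finset.mem_insert_of_mem (Finset.mem_filter.mpr ⟨(Finset.mem_sdiff.mp (hA'sub hc)).1, hadj⟩))
        rcases Finset.mem_insert.mp ha with rfl | ha'
        · rcases Finset.mem_insert.mp hb with rfl | hb'
          · exact absurd rfl hab
          · exact key b hb'
        · rcases Finset.mem_insert.mp hb with rfl | hb'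
          · intro h; exact key a ha' h.symm
          · exact hA'indep a ha' b hb' hab
      · have h1 : X.card ≤ X'.card + N.card := by
          calc X.card ≤ (X ∪ N).card := Finset.card_le_card Finset.subset_union_left
            _ = X'.card + N.card := by rw [hX', Finset.card_sdiff_add_card]
        have h2 : N.card ≤ k + 1 := by
          calc N.card ≤ (X.filter (fun u => G.Adj x u)).card + 1 := Finset.card_insert_le _ _
            _ ≤ k + 1 := by have := hX x hx; omega
        rw [Finset.card_insert_of_notMem hxA']
        calc X.card ≤ X'.card + (k+1) := by omega
          _ ≤ (k+1) * A'.card + (k+1) := by omega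
          _ = (k+1) * (A'.card + 1) := by ring

/-- In a `K_{1,r}`-free graph, a vertex has at most `(r-1)(k+1)` neighbours in any
k-independent set. -/
lemma star_bound_aux [DecidableEq V] (G : SimpleGraph V) [DecidableRel G.Adj] (k r : ℕ)
    (hr : 1 ≤ r) (hG : K1rFree G r)
    (S : Finset V) (hS : IsKIndepFinset G k S) (u : V) :
    (S.filter (fun w => G.Adj u w)).card ≤ (r - 1) * (k + 1) := by
  set X := S.filter (fun w => G.Adj u w) with hXdef
  have hXh : ∀ v ∈ X, (X.filter (fun w => G.Adj v w)).card ≤ k := by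
    intro v hv
    refine le_trans (Finset.card_le_card ?_) (hS v (Finset.mem_filter.mp hv).1)
    exact Finset.filter_subset_filter _ (Finset.filter_subset _ _)
  obtain ⟨A, hAsub, hAindep, hAcard⟩ := greedy_aux G k X hXh
  by_contra hcon
  push_neg at hcon
  have hAr : r ≤ A.card := by
    by_contra h
    push_neg at h
    have : A.card ≤ r - 1 := by omega
    have h2 : (k+1) * A.card ≤ (r-1) * (k+1) := by
      rw [Nat.mul_comm (r-1)]
      exact Nat.mul_le_mul_left _ this
    omega
  obtain ⟨B, hBsub, hBcard⟩ := Finset.exists_subset_card_eq hAr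
  exact hG ⟨u, B, fun a ha => (Finset.mem_filter.mp (hAsub (hBsub ha))).2,
    fun a ha b hb hab => hAindep a (hBsub ha) b (hBsub hb) hab, hBcard⟩

/-- For k ≥ 0, r ≥ 3, a K_{1,r}-free graph of order n with minimum degree
δ ≥ k+1 satisfies α_k(G)·(δ - k + (r-1)(k+1)) ≤ (r-1)(k+1)·n. -/
theorem stmt17 [Fintype V] [Nonempty V] (G : SimpleGraph V) [DecidableRel G.Adj]
    (k r : ℕ) (hr : 3 ≤ r) (hG : K1rFree G r) (hδ : k + 1 ≤ G.minDegree) :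
    kIndepNum G k * (G.minDegree - k + (r - 1) * (k + 1)) ≤
      (r - 1) * (k + 1) * Fintype.card V := by
  classical
  set δ := G.minDegree with hδdef
  set c := (r - 1) * (k + 1) with hc
  set n := Fintype.card V with hn
  -- the k-independence number is attained
  have hmem : kIndepNum G k ∈ {m | ∃ S : Finset V, IsKIndepFinset G k S ∧ S.card = m} := by
    apply Nat.sSup_mem
    · exact ⟨0, ∅, fun v hv => absurd hv (Finset.notMem_empty v), Finset.card_empty⟩
    · refine ⟨n, ?_⟩
      rintro m ⟨S, -, rfl⟩
      exact Finset.card_le_univ S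
  obtain ⟨S, hS, hScard⟩ := hmem
  set T := Sᶜ with hT
  -- lower bound on outgoing edges from each vertex of S
  have hlow : ∀ v ∈ S, δ - k ≤ (T.filter (fun u => G.Adj v u)).card := by
    intro v hv
    have hdeg : δ ≤ G.degree v := G.minDegree_le_degree v
    have hdegeq : G.degree v = (Finset.univ.filter (fun u => G.Adj v u)).card := by
      rw [SimpleGraph.degree]
      congr 1
      ext u
      simp [SimpleGraph.mem_neighborFinset]
    have hsplit : (Finset.univ.filter (fun u => G.Adj v u)).card
        = (S.filter (fun u => G.Adj v u)).card + (T.filter (fun u => G.Adj v u)).card := by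
      rw [← Finset.union_compl S, Finset.filter_union]
      exact Finset.card_union_of_disjoint
        (Finset.disjoint_filter_filter disjoint_compl_right)
    have hk := hS v hv
    omega
  -- double counting
  have hdc : ∑ v ∈ S, (T.filter (fun u => G.Adj v u)).card
      = ∑ u ∈ T, (S.filter (fun w => G.Adj u w)).card := by
    simp only [Finset.card_filter]
    rw [Finset.sum_comm]
    refine Finset.sum_congr rfl fun u _ => Finset.sum_congr rfl fun v _ => ?_
    simp [G.adj_comm]
  have h1 : S.card * (δ - k) ≤ ∑ v ∈ S, (T.filter (fun u => G.Adj v u)).card := by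
    calc S.card * (δ - k) = ∑ _v ∈ S, (δ - k) := by rw [Finset.sum_const, smul_eq_mul]
      _ ≤ _ := Finset.sum_le_sum hlow
  have h2 : ∑ u ∈ T, (S.filter (fun w => G.Adj u w)).card ≤ T.card * c := by
    calc ∑ u ∈ T, (S.filter (fun w => G.Adj u w)).card
        ≤ ∑ _u ∈ T, c := Finset.sum_le_sum fun u _ =>
          star_bound_aux G k r (by omega) hG S hS u
      _ = T.card * c := by rw [Finset.sum_const, smul_eq_mul]
  have hTcard : T.card = n - S.card := Finset.card_compl S
  have hle : S.card ≤ n := Finset.card_le_univ S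
  have main : S.card * (δ - k) ≤ (n - S.card) * c := by
    rw [← hTcard]; omega
  rw [← hScard]
  calc S.card * (δ - k + c) = S.card * (δ - k) + S.card * c := by ring
    _ ≤ (n - S.card) * c + S.card * c := Nat.add_le_add_right main _
    _ = (n - S.card + S.card) * c := by rw [Nat.add_mul]
    _ = n * c := by rw [Nat.sub_add_cancel hle]
    _ = c * n := Nat.mul_comm _ _
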